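/- Let Γ > 0, let n ≥ 1 and 0 ≤ k < 2^(n−1), and let t ∈ [0,1]. Writing Φ^α_{n,k} for the basis element with parameter α > 0, one has lim_{α → 0⁺} Φ^α_{n,k}(t) = Ψ_{n,k}(t); i.e., as the drift parameter vanishes the Ornstein–Uhlenbeck basis elements converge pointwise to the Haar-derived basis elements of the Wiener process. -/

import Mathlib

open Filter Real

lemma sinh_div_self_tendsto :
    Tendsto (fun x : ℝ => Real.sinh x / x) (nhdsWithin 0 {0}ᶜ) (nhds 1) := by
  have h := Real.hasDerivAt_sinh 0
  rw [hasDerivAt_iff_tendsto_slope] at h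
  simpa [slope_fun_def, Real.sinh_zero, Real.cosh_zero, div_eq_inv_mul] using h

lemma key (Γ s h : ℝ) (hΓ : 0 ≤ Γ) (hs : 0 < s) (hh : 0 < h) :
    Tendsto (fun α : ℝ => Real.sqrt (Γ / α) * Real.sinh (α * s) / Real.sqrt (Real.sinh (α * h)))
      (nhdsWithin 0 (Set.Ioi 0)) (nhds (Real.sqrt Γ * s / Real.sqrt h)) := by
  have hmap : ∀ c : ℝ, 0 < c → Tendsto (fun α : ℝ => α * c)
      (nhdsWithin 0 (Set.Ioi 0)) (nhdsWithin 0 {0}ᶜ) := by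
    intro c hc
    apply tendsto_nhdsWithin_of_tendsto_nhds_of_eventually_within
    · have : Tendsto (fun α : ℝ => α * c) (nhds 0) (nhds (0 * c)) :=
        (continuous_mul_right c).tendsto 0
      simpa using this.mono_left nhdsWithin_le_nhds
    · filter_upwards [self_mem_nhdsWithin] with a ha
      exact ne_of_gt (mul_pos ha hc)
  have g1 : Tendsto (fun α : ℝ => Real.sinh (α * s) / (α * s))
      (nhdsWithin 0 (Set.Ioi 0)) (nhds 1) := sinh_div_self_tendsto.comp (hmap s hs)
  have g2 : Tendsto (fun α : ℝ => (α * h) / Real.sinh (α * h))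
      (nhdsWithin 0 (Set.Ioi 0)) (nhds 1) := by
    have := (sinh_div_self_tendsto.comp (hmap h hh)).inv₀ one_ne_zero
    simpa [inv_div] using this
  have gmain : Tendsto
      (fun α : ℝ => Real.sqrt Γ * (Real.sinh (α * s) / (α * s)) * s *
        (Real.sqrt ((α * h) / Real.sinh (α * h)) / Real.sqrt h))
      (nhdsWithin 0 (Set.Ioi 0)) (nhds (Real.sqrt Γ * s / Real.sqrt h)) := by
    have := (((tendsto_const_nhds (x := Real.sqrt Γ)).mul g1).mul
        (tendsto_const_nhds (x := s))).mul
        (((Real.continuous_sqrt.tendsto 1).comp g2).div_const (Real.sqrt h))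
    simpa [mul_comm, mul_assoc, mul_left_comm, mul_div_assoc, div_eq_mul_inv] using this
  refine gmain.congr' ?_
  filter_upwards [self_mem_nhdsWithin] with α hα
  have hα : (0:ℝ) < α := hα
  have hsinh : 0 < Real.sinh (α * h) := Real.sinh_pos_iff.2 (mul_pos hα hh)
  rw [Real.sqrt_div (le_of_lt (mul_pos hα hh)), Real.sqrt_mul hα.le,
    Real.sqrt_div hΓ]
  have hsa : Real.sqrt α ≠ 0 := ne_of_gt (Real.sqrt_pos.2 hα)
  have hsh : Real.sqrt h ≠ 0 := ne_of_gt (Real.sqrt_pos.2 hh)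
  have hss : Real.sqrt (Real.sinh (α * h)) ≠ 0 := ne_of_gt (Real.sqrt_pos.2 hsinh)
  have hαα : Real.sqrt α * Real.sqrt α = α := Real.mul_self_sqrt hα.le
  field_simp
  linear_combination Real.sqrt Γ * hαα


lemma target_eq (Γ : ℝ) (n : ℕ) (s : ℝ) :
    Real.sqrt Γ * s / Real.sqrt ((2:ℝ) ^ (-(n:ℤ) + 1)) =
      Real.sqrt Γ * (2:ℝ) ^ (((n:ℝ) - 1) / 2) * s := by
  have h1 : ((2:ℝ) ^ (-(n:ℤ) + 1)) = (2:ℝ) ^ ((1 - (n:ℝ)) : ℝ) := by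
    rw [← Real.rpow_intCast]
    congr 1
    push_cast
    ring
  have h2 : Real.sqrt ((2:ℝ) ^ (-(n:ℤ) + 1)) = (2:ℝ) ^ (((1:ℝ) - n) / 2) := by
    rw [h1, Real.sqrt_eq_rpow, ← Real.rpow_mul (by norm_num)]
    ring_nf
  rw [h2, div_eq_mul_inv, ← Real.rpow_neg (by norm_num)]
  rw [show -(((1:ℝ) - n) / 2) = ((n:ℝ) - 1) / 2 by ring]
  ring


/-- The Haar-like basis element `Φ^α_{n,k}` (for `n ≥ 1`) of the Ornstein–Uhlenbeck
process with diffusion coefficient `Γ` and drift parameter `α`. -/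
noncomputable def PhiA (Γ α : ℝ) (n k : ℕ) (t : ℝ) : ℝ :=
  if 2 * (k : ℝ) * 2 ^ (-(n : ℤ)) ≤ t ∧ t ≤ (2 * (k : ℝ) + 1) * 2 ^ (-(n : ℤ)) then
    Real.sqrt (Γ / α) * Real.sinh (α * (t - 2 * (k : ℝ) * 2 ^ (-(n : ℤ)))) /
      Real.sqrt (Real.sinh (α * 2 ^ (-(n : ℤ) + 1)))
  else if (2 * (k : ℝ) + 1) * 2 ^ (-(n : ℤ)) ≤ t ∧ t ≤ 2 * ((k : ℝ) + 1) * 2 ^ (-(n : ℤ)) then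
    Real.sqrt (Γ / α) * Real.sinh (α * (2 * ((k : ℝ) + 1) * 2 ^ (-(n : ℤ)) - t)) /
      Real.sqrt (Real.sinh (α * 2 ^ (-(n : ℤ) + 1)))
  else 0

/-- The Haar-derived basis element `Ψ_{n,k}` (for `n ≥ 1`) of the Wiener process with
diffusion coefficient `Γ`. -/
noncomputable def Psi (Γ : ℝ) (n k : ℕ) (t : ℝ) : ℝ :=
  if 2 * (k : ℝ) * 2 ^ (-(n : ℤ)) ≤ t ∧ t ≤ (2 * (k : ℝ) + 1) * 2 ^ (-(n : ℤ)) then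
    Real.sqrt Γ * 2 ^ (((n : ℝ) - 1) / 2) * (t - 2 * (k : ℝ) * 2 ^ (-(n : ℤ)))
  else if (2 * (k : ℝ) + 1) * 2 ^ (-(n : ℤ)) ≤ t ∧ t ≤ 2 * ((k : ℝ) + 1) * 2 ^ (-(n : ℤ)) then
    Real.sqrt Γ * 2 ^ (((n : ℝ) - 1) / 2) * (2 * ((k : ℝ) + 1) * 2 ^ (-(n : ℤ)) - t)
  else 0

/-- As the drift parameter vanishes, the Ornstein–Uhlenbeck basis elements converge
pointwise to the Haar-derived basis elements of the Wiener process: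
`lim_{α → 0⁺} Φ^α_{n,k}(t) = Ψ_{n,k}(t)`. -/
theorem phi_tendsto_psi (Γ : ℝ) (hΓ : 0 < Γ) (n k : ℕ) (hn : 1 ≤ n)
    (hk : k < 2 ^ (n - 1)) (t : ℝ) (ht : t ∈ Set.Icc (0 : ℝ) 1) :
    Filter.Tendsto (fun α : ℝ => PhiA Γ α n k t) (nhdsWithin 0 (Set.Ioi 0))
      (nhds (Psi Γ n k t)) := by
  have h2pos : (0:ℝ) < (2:ℝ) ^ (-(n:ℤ) + 1) := by positivity
  unfold PhiA Psi
  by_cases h1 : 2 * (k : ℝ) * 2 ^ (-(n : ℤ)) ≤ t ∧ t ≤ (2 * (k : ℝ) + 1) * 2 ^ (-(n : ℤ))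
  · simp only [if_pos h1]
    rcases eq_or_lt_of_le h1.1 with he | hlt
    · have hz : t - 2 * (k : ℝ) * 2 ^ (-(n : ℤ)) = 0 := by linarith
      simp only [hz, mul_zero, Real.sinh_zero, zero_div]
      simpa using tendsto_const_nhds
    · rw [← target_eq Γ n (t - 2 * (k : ℝ) * 2 ^ (-(n : ℤ)))]
      exact key Γ (t - 2 * (k : ℝ) * 2 ^ (-(n : ℤ))) ((2:ℝ) ^ (-(n:ℤ) + 1)) hΓ.le
        (by linarith) h2pos
  · simp only [if_neg h1]
    by_cases h2 : (2 * (k : ℝ) + 1) * 2 ^ (-(n : ℤ)) ≤ t ∧ t ≤ 2 * ((k : ℝ) + 1) * 2 ^ (-(n : ℤ))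
    · simp only [if_pos h2]
      rcases eq_or_lt_of_le h2.2 with he | hlt
      · have hz : 2 * ((k : ℝ) + 1) * 2 ^ (-(n : ℤ)) - t = 0 := by linarith
        simp only [hz, mul_zero, Real.sinh_zero, zero_div]
        simpa using tendsto_const_nhds
      · rw [← target_eq Γ n (2 * ((k : ℝ) + 1) * 2 ^ (-(n : ℤ)) - t)]
        exact key Γ (2 * ((k : ℝ) + 1) * 2 ^ (-(n : ℤ)) - t) ((2:ℝ) ^ (-(n:ℤ) + 1)) hΓ.le
          (by linarith) h2pos
    · simp only [if_neg h2]
      exact tendsto_const_nhds
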